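/- In the incidence Hopf algebra on graphs, the antipode applied to (the isomorphism class of) a simple graph G on vertex set [n] is S(G) = ∑_{F flat of G} (-1)^{c(F)} · a(G/F) · F, where c(F) is the number of connected components of the flat F and a(G/F) is the number of acyclic orientations of the contraction G/F. -/

import Mathlib

open TensorProduct

/-- The disjoint union of two simple graphs. -/
def disjUnion {V W : Type} (G : SimpleGraph V) (G' : SimpleGraph W) :
    SimpleGraph (V ⊕ W) where
  Adj a b := Sum.LiftRel G.Adj G'.Adj a b
  symm := by
    constructor
    rintro a b (h | h)
    · exact Sum.LiftRel.inl h.symm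
    · exact Sum.LiftRel.inr h.symm
  loopless := by
    constructor
    rintro a (h | h)
    · exact G.loopless.irrefl _ h
    · exact G'.loopless.irrefl _ h

/-- `Fl` is a flat of `G`: a spanning subgraph each of whose connected
components is an induced subgraph of `G`. -/
def IsFlat {V : Type} (G Fl : SimpleGraph V) : Prop :=
  Fl ≤ G ∧ ∀ u v, Fl.Reachable u v → G.Adj u v → Fl.Adj u v

/-- The contraction `G/Fl`: the graph whose vertices are the connected
components of `Fl`, with two distinct components adjacent when `G` has an edge
between them. -/
def contract {V : Type} (G Fl : SimpleGraph V) :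
    SimpleGraph Fl.ConnectedComponent where
  Adj c d := c ≠ d ∧ ∃ u v, Fl.connectedComponentMk u = c ∧
    Fl.connectedComponentMk v = d ∧ G.Adj u v
  symm := by
    constructor
    rintro c d ⟨hne, u, v, hu, hv, ha⟩
    exact ⟨hne.symm, v, u, hv, hu, ha.symm⟩
  loopless := by
    constructor
    rintro c ⟨hne, -⟩
    exact hne rfl

/-- An acyclic orientation of a simple graph `G`: a choice of direction `r` for
each edge of `G` creating no directed cycle. -/
structure AcyclicOrientation {V : Type} (G : SimpleGraph V) where
  r : V → V → Prop
  le_adj : ∀ u v, r u v → G.Adj u v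
  total : ∀ u v, G.Adj u v → r u v ∨ r v u
  acyclic : ∀ u, ¬ Relation.TransGen r u u



/-! ### Auxiliary lemmas -/

theorem transGen_comap {α β : Type*} (f : α → β) (r : β → β → Prop) {u v : α}
    (h : Relation.TransGen (fun a b => r (f a) (f b)) u v) :
    Relation.TransGen r (f u) (f v) := by
  induction h with
  | single h => exact .single h
  | tail _ h ih => exact .tail ih h

namespace AcyclicOrientation

variable {V W : Type} {G : SimpleGraph V}

theorem ext' {σ τ : AcyclicOrientation G} (h : σ.r = τ.r) : σ = τ := by
  cases σ; cases τ; cases h; rfl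

instance [Finite V] : Finite (AcyclicOrientation G) :=
  Finite.of_injective (fun σ => σ.r) (fun _ _ h => ext' h)

instance [IsEmpty V] : Unique (AcyclicOrientation G) where
  default :=
    { r := fun _ _ => False
      le_adj := fun u => isEmptyElim u
      total := fun u => isEmptyElim u
      acyclic := fun u => isEmptyElim u }
  uniq σ := by
    apply ext'; funext u; exact isEmptyElim u

/-- Transport of acyclic orientations along a graph isomorphism. -/
noncomputable def equivOfIso {G : SimpleGraph V} {G' : SimpleGraph W} (e : G ≃g G') :
    AcyclicOrientation G ≃ AcyclicOrientation G' where
  toFun σ :=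
    { r := fun u v => σ.r (e.symm u) (e.symm v)
      le_adj := fun u v h => e.symm.map_rel_iff.mp (σ.le_adj _ _ h)
      total := fun u v h => σ.total _ _ (e.symm.map_rel_iff.mpr h)
      acyclic := fun u h => σ.acyclic (e.symm u) (transGen_comap e.symm σ.r h) }
  invFun τ :=
    { r := fun u v => τ.r (e u) (e v)
      le_adj := fun u v h => e.map_rel_iff.mp (τ.le_adj _ _ h)
      total := fun u v h => τ.total _ _ (e.map_rel_iff.mpr h)
      acyclic := fun u h => τ.acyclic (e u) (transGen_comap e τ.r h) }
  left_inv σ := by apply ext'; funext u v; simp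
  right_inv τ := by apply ext'; funext u v; simp

theorem exists_source [Finite V] [Nonempty V] (σ : AcyclicOrientation G) :
    ∃ v, ∀ u, ¬ σ.r u v := by
  haveI : IsIrrefl V (Relation.TransGen σ.r) := ⟨fun a h => σ.acyclic a h⟩
  have hwf : WellFounded (Relation.TransGen σ.r) :=
    Finite.wellFounded_of_trans_of_irrefl _
  obtain ⟨v, -, hv⟩ := hwf.has_min Set.univ ⟨Classical.arbitrary V, trivial⟩
  exact ⟨v, fun u hu => hv u trivial (.single hu)⟩

/-- Orientations of a graph induced on `s`, where the complement of `s` is independent,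
correspond to orientations whose sources include the complement of `s`. -/
noncomputable def extendEquiv (Γ : SimpleGraph V) (s : Set V)
    (hind : ∀ u v, u ∉ s → v ∉ s → ¬ Γ.Adj u v) :
    AcyclicOrientation (Γ.induce s) ≃
      {σ : AcyclicOrientation Γ // ∀ w, w ∉ s → ∀ u, ¬ σ.r u w} where
  toFun τ := by
    refine ⟨⟨fun a b => (∃ (ha : a ∈ s) (hb : b ∈ s), τ.r ⟨a, ha⟩ ⟨b, hb⟩) ∨
        (a ∉ s ∧ Γ.Adj a b), ?_, ?_, ?_⟩, ?_⟩
    · rintro a b (⟨ha, hb, h⟩ | ⟨ha, h⟩)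
      · exact τ.le_adj _ _ h
      · exact h
    · intro a b hab
      by_cases ha : a ∈ s
      · by_cases hb : b ∈ s
        · rcases τ.total ⟨a, ha⟩ ⟨b, hb⟩ hab with h | h
          · exact Or.inl (Or.inl ⟨ha, hb, h⟩)
          · exact Or.inr (Or.inl ⟨hb, ha, h⟩)
        · exact Or.inr (Or.inr ⟨hb, hab.symm⟩)
      · exact Or.inl (Or.inr ⟨ha, hab⟩)
    · -- acyclicity
      intro u hu
      have hstep : ∀ a b, ((∃ (ha : a ∈ s) (hb : b ∈ s), τ.r ⟨a, ha⟩ ⟨b, hb⟩) ∨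
          (a ∉ s ∧ Γ.Adj a b)) → b ∈ s := by
        rintro a b (⟨ha, hb, h⟩ | ⟨ha, h⟩)
        · exact hb
        · by_contra hb
          exact hind a b ha hb h
      have hmem : ∀ {x y}, Relation.TransGen (fun a b =>
          (∃ (ha : a ∈ s) (hb : b ∈ s), τ.r ⟨a, ha⟩ ⟨b, hb⟩) ∨ (a ∉ s ∧ Γ.Adj a b)) x y →
          y ∈ s := by
        intro x y h
        induction h with
        | single h => exact hstep _ _ h
        | tail _ h _ => exact hstep _ _ h
      have key : ∀ {x y}, Relation.TransGen (fun a b =>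
          (∃ (ha : a ∈ s) (hb : b ∈ s), τ.r ⟨a, ha⟩ ⟨b, hb⟩) ∨ (a ∉ s ∧ Γ.Adj a b)) x y →
          ∀ (hx : x ∈ s) (hy : y ∈ s), Relation.TransGen τ.r ⟨x, hx⟩ ⟨y, hy⟩ := by
        intro x y h
        induction h with
        | single h => intro hx hy
                      rcases h with ⟨ha, hb, h⟩ | ⟨ha, h⟩
                      · exact .single h
                      · exact absurd hx ha
        | tail hxz h ih =>
            intro hx hy
            have hz := hmem hxz
            rcases h with ⟨ha, hb, h⟩ | ⟨ha, h⟩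
            · exact .tail (ih hx hz) h
            · exact absurd hz ha
      have hu' : u ∈ s := hmem hu
      exact τ.acyclic ⟨u, hu'⟩ (key hu hu' hu')
    · rintro w hw u (⟨ha, hb, h⟩ | ⟨ha, h⟩)
      · exact hw hb
      · exact hind u w ha hw h
  invFun σp :=
    { r := fun a b => σp.1.r a.1 b.1
      le_adj := fun a b h => σp.1.le_adj _ _ h
      total := fun a b h => σp.1.total _ _ h
      acyclic := fun a h => σp.1.acyclic a.1 (transGen_comap Subtype.val σp.1.r h) }
  left_inv τ := by
    apply ext'; funext a b; apply propext
    constructor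
    · rintro (⟨ha, hb, h⟩ | ⟨ha, h⟩)
      · exact h
      · exact absurd a.2 ha
    · intro h; exact Or.inl ⟨a.2, b.2, h⟩
  right_inv := by
    rintro ⟨σ, hsrc⟩
    apply Subtype.ext
    apply ext'; funext a b; apply propext
    constructor
    · rintro (⟨ha, hb, h⟩ | ⟨ha, h⟩)
      · exact h
      · rcases σ.total a b h with h' | h'
        · exact h'
        · exact absurd h' (hsrc a ha b)
    · intro h
      have hb : b ∈ s := by
        by_contra hb
        exact hsrc b hb a h
      by_cases ha : a ∈ s
      · exact Or.inl ⟨ha, hb, h⟩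
      · exact Or.inr ⟨ha, σ.le_adj _ _ h⟩

end AcyclicOrientation
namespace FlatAux

open SimpleGraph

variable {V : Type} (F : SimpleGraph V) (A : Set V)

/-- `A` is closed under adjacency in `F`. -/
def AdjClosed : Prop := ∀ u v, F.Adj u v → (u ∈ A ↔ v ∈ A)

theorem reach_mem (hA : AdjClosed F A) {u v : V} (h : F.Reachable u v) :
    u ∈ A ↔ v ∈ A := by
  obtain ⟨w⟩ := h
  induction w with
  | nil => exact Iff.rfl
  | cons h p ih => exact (hA _ _ h).trans ih

theorem reach_iff (hA : AdjClosed F A) {a b : ↥A} :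
    (F.induce A).Reachable a b ↔ F.Reachable ↑a ↑b := by
  constructor
  · intro h
    exact h.map (SimpleGraph.Embedding.induce A).toHom
  · intro h
    obtain ⟨w⟩ := h
    have key : ∀ (u v : V) (w : F.Walk u v) (hu : u ∈ A) (hv : v ∈ A),
        (F.induce A).Reachable ⟨u, hu⟩ ⟨v, hv⟩ := by
      intro u v w
      induction w with
      | nil => intro hu hv; exact SimpleGraph.Reachable.refl _
      | @cons u x v h p ih =>
          intro hu hv
          have hx : x ∈ A := (hA _ _ h).mp hu
          exact (SimpleGraph.Adj.reachable
            (show (F.induce A).Adj ⟨u, hu⟩ ⟨x, hx⟩ from h)).trans (ih hx hv)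
    exact key _ _ w a.2 b.2

/-- Whether a connected component of `F` lies inside `A`. -/
noncomputable def cIn (hA : AdjClosed F A) : F.ConnectedComponent → Prop :=
  SimpleGraph.ConnectedComponent.lift (fun v => v ∈ A)
    (fun _ _ p _ => propext (reach_mem F A hA p.reachable))

theorem cIn_mk (hA : AdjClosed F A) (v : V) :
    cIn F A hA (F.connectedComponentMk v) = (v ∈ A) := rfl

/-- The map from components of the induced graph to components of `F` in `A`. -/
noncomputable def compMap (hA : AdjClosed F A) :
    (F.induce A).ConnectedComponent → {c : F.ConnectedComponent // cIn F A hA c} :=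
  SimpleGraph.ConnectedComponent.lift
    (fun a => ⟨F.connectedComponentMk ↑a, a.2⟩)
    (fun _ _ p _ => Subtype.ext
      (SimpleGraph.ConnectedComponent.sound ((reach_iff F A hA).mp p.reachable)))

theorem compMap_mk (hA : AdjClosed F A) (a : ↥A) :
    compMap F A hA ((F.induce A).connectedComponentMk a) =
      ⟨F.connectedComponentMk ↑a, a.2⟩ := rfl

theorem compMap_bijective (hA : AdjClosed F A) :
    Function.Bijective (compMap F A hA) := by
  constructor
  · intro c d
    refine SimpleGraph.ConnectedComponent.ind₂ (fun a b => ?_) c d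
    intro h
    rw [compMap_mk, compMap_mk] at h
    have h2 : F.connectedComponentMk ↑a = F.connectedComponentMk ↑b :=
      congrArg Subtype.val h
    exact SimpleGraph.ConnectedComponent.sound
      ((reach_iff F A hA).mpr (SimpleGraph.ConnectedComponent.exact h2))
  · rintro ⟨c, hc⟩
    revert hc
    refine SimpleGraph.ConnectedComponent.ind (fun v => ?_) c
    intro hc
    exact ⟨(F.induce A).connectedComponentMk ⟨v, hc⟩, Subtype.ext rfl⟩

/-- The equivalence between components of the induced graph and components of `F`
inside `A`. -/
noncomputable def compEquiv (hA : AdjClosed F A) :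
    (F.induce A).ConnectedComponent ≃ {c : F.ConnectedComponent // cIn F A hA c} :=
  Equiv.ofBijective _ (compMap_bijective F A hA)

theorem compEquiv_mk (hA : AdjClosed F A) (a : ↥A) :
    compEquiv F A hA ((F.induce A).connectedComponentMk a) =
      ⟨F.connectedComponentMk ↑a, a.2⟩ := rfl

theorem card_cc [Finite V] (hA : AdjClosed F A) :
    Nat.card F.ConnectedComponent =
      Nat.card (F.induce A).ConnectedComponent +
        Nat.card {c : F.ConnectedComponent // ¬ cIn F A hA c} := by
  classical
  have e1 : F.ConnectedComponent ≃
      {c : F.ConnectedComponent // cIn F A hA c} ⊕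
        {c : F.ConnectedComponent // ¬ cIn F A hA c} :=
    (Equiv.sumCompl _).symm
  rw [Nat.card_congr e1, Nat.card_sum, Nat.card_congr (compEquiv F A hA)]

/-- The contraction of an induced subgraph is isomorphic to an induced subgraph of the
contraction. -/
noncomputable def contractIso (G : SimpleGraph V) (hA : AdjClosed F A) :
    contract (G.induce A) (F.induce A) ≃g
      (contract G F).induce {c : F.ConnectedComponent | cIn F A hA c} :=
  ⟨compEquiv F A hA, by
    intro c d
    constructor
    · rintro ⟨hne, u, v, hu, hv, huv⟩
      have hu' : F.connectedComponentMk u = ((compEquiv F A hA) c).val := hu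
      have hv' : F.connectedComponentMk v = ((compEquiv F A hA) d).val := hv
      have hu2 : u ∈ A := by
        have h2 := (compEquiv F A hA c).2
        rw [← hu'] at h2
        exact h2
      have hv2 : v ∈ A := by
        have h2 := (compEquiv F A hA d).2
        rw [← hv'] at h2
        exact h2
      have hc : (F.induce A).connectedComponentMk ⟨u, hu2⟩ = c :=
        (compEquiv F A hA).injective (Subtype.ext hu')
      have hd : (F.induce A).connectedComponentMk ⟨v, hv2⟩ = d :=
        (compEquiv F A hA).injective (Subtype.ext hv')
      refine ⟨?_, ⟨u, hu2⟩, ⟨v, hv2⟩, hc, hd, huv⟩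
      intro h
      exact hne (congrArg (fun x => ((compEquiv F A hA) x).1) h)
    · rintro ⟨hne, u, v, hu, hv, huv⟩
      refine ⟨?_, ↑u, ↑v, ?_, ?_, huv⟩
      · intro h
        exact hne ((compEquiv F A hA).injective (Subtype.ext h))
      · rw [← hu]; rfl
      · rw [← hv]; rfl⟩

/-- Master counting lemma for acyclic orientations of contractions of induced
subgraphs. -/
theorem count_eq (G : SimpleGraph V) (hA : AdjClosed F A)
    (hAG : ∀ u v, u ∉ A → v ∉ A → G.Adj u v → F.Adj u v) :
    Nat.card (AcyclicOrientation (contract (G.induce A) (F.induce A))) =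
      Nat.card {σ : AcyclicOrientation (contract G F) //
        ∀ c, ¬ cIn F A hA c → ∀ u, ¬ σ.r u c} := by
  have hind : ∀ c d, c ∉ {c : F.ConnectedComponent | cIn F A hA c} →
      d ∉ {c : F.ConnectedComponent | cIn F A hA c} → ¬ (contract G F).Adj c d := by
    rintro c d hc hd ⟨hne, u, v, hu, hv, huv⟩
    have hu2 : u ∉ A := by rw [← hu] at hc; exact hc
    have hv2 : v ∉ A := by rw [← hv] at hd; exact hd
    have := hAG u v hu2 hv2 huv
    exact hne (hu ▸ hv ▸ SimpleGraph.ConnectedComponent.sound this.reachable)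
  rw [Nat.card_congr (AcyclicOrientation.equivOfIso (contractIso F A G hA))]
  rw [Nat.card_congr (AcyclicOrientation.extendEquiv (contract G F) _ hind)]
  rfl

end FlatAux
namespace FlatAux

open SimpleGraph

variable {V : Type}

/-- Glue a graph on `A` with `G` outside of `A`. -/
def joinG (G : SimpleGraph V) (A : Set V) (Fl : SimpleGraph ↥A) : SimpleGraph V where
  Adj u v := (∃ (hu : u ∈ A) (hv : v ∈ A), Fl.Adj ⟨u, hu⟩ ⟨v, hv⟩) ∨
    (u ∉ A ∧ v ∉ A ∧ G.Adj u v)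
  symm := by
    constructor
    rintro u v (⟨hu, hv, h⟩ | ⟨hu, hv, h⟩)
    · exact Or.inl ⟨hv, hu, h.symm⟩
    · exact Or.inr ⟨hv, hu, h.symm⟩
  loopless := by
    constructor
    rintro u (⟨hu, hv, h⟩ | ⟨hu, hv, h⟩)
    · exact Fl.loopless.irrefl _ h
    · exact G.loopless.irrefl _ h

theorem joinG_adjClosed (G : SimpleGraph V) (A : Set V) (Fl : SimpleGraph ↥A) :
    AdjClosed (joinG G A Fl) A := by
  rintro u v (⟨hu, hv, h⟩ | ⟨hu, hv, h⟩)
  · exact iff_of_true hu hv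
  · exact iff_of_false hu hv

theorem joinG_hAG (G : SimpleGraph V) (A : Set V) (Fl : SimpleGraph ↥A) :
    ∀ u v, u ∉ A → v ∉ A → G.Adj u v → (joinG G A Fl).Adj u v :=
  fun _ _ hu hv h => Or.inr ⟨hu, hv, h⟩

theorem joinG_induce (G : SimpleGraph V) (A : Set V) (Fl : SimpleGraph ↥A) :
    (joinG G A Fl).induce A = Fl := by
  ext a b
  constructor
  · rintro (⟨hu, hv, h⟩ | ⟨hu, hv, h⟩)
    · exact h
    · exact absurd a.2 hu
  · intro h
    exact Or.inl ⟨a.2, b.2, h⟩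

theorem joinG_isFlat (G : SimpleGraph V) (A : Set V) (Fl : SimpleGraph ↥A)
    (hFl : IsFlat (G.induce A) Fl) : IsFlat G (joinG G A Fl) := by
  constructor
  · rintro u v (⟨hu, hv, h⟩ | ⟨hu, hv, h⟩)
    · exact hFl.1 h
    · exact h
  · intro u v hreach hadj
    by_cases hu : u ∈ A
    · have hv : v ∈ A := (reach_mem _ _ (joinG_adjClosed G A Fl) hreach).mp hu
      have hr2 : ((joinG G A Fl).induce A).Reachable ⟨u, hu⟩ ⟨v, hv⟩ :=
        (reach_iff _ _ (joinG_adjClosed G A Fl)).mpr hreach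
      rw [joinG_induce] at hr2
      exact Or.inl ⟨hu, hv, hFl.2 _ _ hr2 hadj⟩
    · have hv : v ∉ A := fun hv =>
        hu ((reach_mem _ _ (joinG_adjClosed G A Fl) hreach).mpr hv)
      exact Or.inr ⟨hu, hv, hadj⟩

theorem induce_isFlat (G F : SimpleGraph V) (A : Set V) (hA : AdjClosed F A)
    (hF : IsFlat G F) : IsFlat (G.induce A) (F.induce A) := by
  constructor
  · intro a b h
    exact hF.1 h
  · intro a b hreach hadj
    have : F.Reachable ↑a ↑b := (reach_iff _ _ hA).mp hreach
    exact hF.2 _ _ this hadj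

theorem joinG_recover (G F : SimpleGraph V) (hF : IsFlat G F) (A : Set V)
    (hA : AdjClosed F A)
    (hind : ∀ u v, u ∉ A → v ∉ A → G.Adj u v → F.Adj u v) :
    joinG G A (F.induce A) = F := by
  ext u v
  constructor
  · rintro (⟨hu, hv, h⟩ | ⟨hu, hv, h⟩)
    · exact h
    · exact hind u v hu hv h
  · intro h
    by_cases hu : u ∈ A
    · exact Or.inl ⟨hu, (hA u v h).mp hu, h⟩
    · exact Or.inr ⟨hu, fun hv => hu ((hA u v h).mpr hv), hF.1 h⟩

/-- Graphs on empty vertex types are isomorphic. -/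
def isoOfIsEmpty {α β : Type} [IsEmpty α] [IsEmpty β] (G : SimpleGraph α)
    (G' : SimpleGraph β) : G ≃g G' :=
  ⟨Equiv.equivOfIsEmpty α β, by intro a; exact isEmptyElim a⟩

/-- Congruence of disjoint unions. -/
def disjUnionCongr {α β γ δ : Type} {G1 : SimpleGraph α} {G2 : SimpleGraph β}
    {G3 : SimpleGraph γ} {G4 : SimpleGraph δ} (e1 : G1 ≃g G3) (e2 : G2 ≃g G4) :
    disjUnion G1 G2 ≃g disjUnion G3 G4 :=
  ⟨Equiv.sumCongr e1.toEquiv e2.toEquiv, by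
    rintro (a | a) (b | b)
    · constructor
      · rintro (h : Sum.LiftRel _ _ _ _)
        cases h with
        | inl h => exact Sum.LiftRel.inl (e1.map_rel_iff.mp h)
      · rintro (h : Sum.LiftRel _ _ _ _)
        cases h with
        | inl h => exact Sum.LiftRel.inl (e1.map_rel_iff.mpr h)
    · constructor
      · rintro (h : Sum.LiftRel _ _ _ _); cases h
      · rintro (h : Sum.LiftRel _ _ _ _); cases h
    · constructor
      · rintro (h : Sum.LiftRel _ _ _ _); cases h
      · rintro (h : Sum.LiftRel _ _ _ _); cases h
    · constructor
      · rintro (h : Sum.LiftRel _ _ _ _)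
        cases h with
        | inr h => exact Sum.LiftRel.inr (e2.map_rel_iff.mp h)
      · rintro (h : Sum.LiftRel _ _ _ _)
        cases h with
        | inr h => exact Sum.LiftRel.inr (e2.map_rel_iff.mpr h)⟩

/-- The disjoint union of a graph on `A` and the induced graph on `Aᶜ` is the join. -/
def joinIso (G : SimpleGraph V) (A : Set V) [DecidablePred (· ∈ A)]
    (Fl : SimpleGraph ↥A) :
    disjUnion Fl (G.induce Aᶜ) ≃g joinG G A Fl :=
  ⟨Equiv.sumCompl (· ∈ A), by
    rintro (a | a) (b | b)
    · constructor
      · rintro (⟨hu, hv, h⟩ | ⟨hu, hv, h⟩)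
        · exact Sum.LiftRel.inl h
        · exact absurd a.2 hu
      · rintro (h : Sum.LiftRel _ _ _ _)
        cases h with
        | inl h => exact Or.inl ⟨a.2, b.2, h⟩
    · constructor
      · rintro (⟨hu, hv, h⟩ | ⟨hu, hv, h⟩)
        · exact absurd hv b.2
        · exact absurd a.2 hu
      · rintro (h : Sum.LiftRel _ _ _ _); cases h
    · constructor
      · rintro (⟨hu, hv, h⟩ | ⟨hu, hv, h⟩)
        · exact absurd hu a.2
        · exact absurd b.2 hv
      · rintro (h : Sum.LiftRel _ _ _ _); cases h
    · constructor
      · rintro (⟨hu, hv, h⟩ | ⟨hu, hv, h⟩)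
        · exact absurd hu a.2
        · exact Sum.LiftRel.inr h
      · rintro (h : Sum.LiftRel _ _ _ _)
        cases h with
        | inr h => exact Or.inr ⟨a.2, b.2, h⟩⟩

end FlatAux
namespace FlatAux

theorem key_count {W : Type} [Fintype W] [Nonempty W] (Γ : SimpleGraph W) :
    ∑ B : Finset W, ((-1 : ℤ) ^ B.card *
      (Nat.card {σ : AcyclicOrientation Γ // ∀ c ∈ B, ∀ u, ¬ σ.r u c} : ℤ)) = 0 := by
  classical
  letI : Fintype (AcyclicOrientation Γ) := Fintype.ofFinite _
  have hcard : ∀ B : Finset W,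
      ((Nat.card {σ : AcyclicOrientation Γ // ∀ c ∈ B, ∀ u, ¬ σ.r u c} : ℤ)) =
        ∑ σ : AcyclicOrientation Γ,
          if (∀ c ∈ B, ∀ u, ¬ σ.r u c) then (1 : ℤ) else 0 := by
    intro B
    rw [Nat.card_eq_fintype_card, Fintype.card_subtype, Finset.card_filter]
    push_cast
    exact Finset.sum_congr rfl (fun σ _ => by split <;> simp)
  calc ∑ B : Finset W, ((-1 : ℤ) ^ B.card *
        (Nat.card {σ : AcyclicOrientation Γ // ∀ c ∈ B, ∀ u, ¬ σ.r u c} : ℤ))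
      = ∑ B : Finset W, ∑ σ : AcyclicOrientation Γ,
          ((-1 : ℤ) ^ B.card * if (∀ c ∈ B, ∀ u, ¬ σ.r u c) then (1 : ℤ) else 0) :=
        Finset.sum_congr rfl fun B _ => by rw [hcard, Finset.mul_sum]
    _ = ∑ σ : AcyclicOrientation Γ, ∑ B : Finset W,
          ((-1 : ℤ) ^ B.card * if (∀ c ∈ B, ∀ u, ¬ σ.r u c) then (1 : ℤ) else 0) :=
        Finset.sum_comm
    _ = 0 := by
        refine Finset.sum_eq_zero fun σ _ => ?_
        set S : Finset W := Finset.univ.filter (fun c => ∀ u, ¬ σ.r u c) with hS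
        have hcond : ∀ B : Finset W, (∀ c ∈ B, ∀ u, ¬ σ.r u c) ↔ B ⊆ S := by
          intro B
          constructor
          · intro h c hc
            rw [hS, Finset.mem_filter]
            exact ⟨Finset.mem_univ _, h c hc⟩
          · intro h c hc
            have := h hc
            rw [hS, Finset.mem_filter] at this
            exact this.2
        calc ∑ B : Finset W,
              ((-1 : ℤ) ^ B.card * if (∀ c ∈ B, ∀ u, ¬ σ.r u c) then (1 : ℤ) else 0)
            = ∑ B : Finset W, (if B ⊆ S then ((-1 : ℤ) ^ B.card) else 0) := by
              refine Finset.sum_congr rfl fun B _ => ?_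
              rw [mul_ite, mul_one, mul_zero]
              exact if_congr (hcond B) rfl rfl
          _ = ∑ B ∈ Finset.univ.filter (· ⊆ S), ((-1 : ℤ) ^ B.card) :=
              (Finset.sum_filter _ _).symm
          _ = ∑ B ∈ S.powerset, ((-1 : ℤ) ^ B.card) := by
              congr 1
              ext B
              simp [Finset.mem_powerset]
          _ = 0 := by
              apply Finset.sum_powerset_neg_one_pow_card_of_nonempty
              obtain ⟨v, hv⟩ := σ.exists_source
              exact ⟨v, by rw [hS, Finset.mem_filter]; exact ⟨Finset.mem_univ _, hv⟩⟩

theorem ao_card_empty {W : Type} [IsEmpty W] (Γ : SimpleGraph W) :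
    Nat.card (AcyclicOrientation Γ) = 1 :=
  Nat.card_unique

end FlatAux
namespace FlatAux

open SimpleGraph

noncomputable instance {V : Type} [Finite V] {F : SimpleGraph V} :
    Fintype F.ConnectedComponent := Fintype.ofFinite _

/-- The coefficient in the antipode formula. -/
noncomputable def coef {V : Type} (G Fl : SimpleGraph V) : ℤ :=
  (-1 : ℤ) ^ (Nat.card Fl.ConnectedComponent) *
    (Nat.card (AcyclicOrientation (contract G Fl)) : ℤ)

variable {V : Type} [Fintype V]

open scoped Classical in
/-- The set of connected components of the join lying outside `A`. -/
noncomputable def Bof (G : SimpleGraph V) (A : Set V) (Fl : SimpleGraph ↥A) :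
    Finset ((joinG G A Fl).ConnectedComponent) :=
  Finset.univ.filter (fun c => ¬ cIn (joinG G A Fl) A (joinG_adjClosed G A Fl) c)

open scoped Classical in
/-- The set of vertices whose component is not in `B`. -/
noncomputable def Aof (F : SimpleGraph V) (B : Finset F.ConnectedComponent) : Finset V :=
  Finset.univ.filter (fun v => F.connectedComponentMk v ∉ B)

theorem mem_Bof (G : SimpleGraph V) (A : Set V) (Fl : SimpleGraph ↥A)
    (c : (joinG G A Fl).ConnectedComponent) :
    c ∈ Bof G A Fl ↔ ¬ cIn (joinG G A Fl) A (joinG_adjClosed G A Fl) c := by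
  classical
  simp [Bof]

theorem mem_Aof (F : SimpleGraph V) (B : Finset F.ConnectedComponent) (v : V) :
    v ∈ Aof F B ↔ F.connectedComponentMk v ∉ B := by
  classical
  simp [Aof]

theorem Aof_adjClosed (F : SimpleGraph V) (B : Finset F.ConnectedComponent) :
    AdjClosed F (↑(Aof F B) : Set V) := by
  intro u v h
  have : F.connectedComponentMk u = F.connectedComponentMk v :=
    SimpleGraph.ConnectedComponent.sound h.reachable
  constructor
  · intro hu
    rw [Finset.mem_coe, mem_Aof] at hu ⊢
    rwa [← this]
  · intro hv
    rw [Finset.mem_coe, mem_Aof] at hv ⊢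
    rwa [this]

theorem Aof_Bof (G : SimpleGraph V) (A : Finset V) (Fl : SimpleGraph ↥(↑A : Set V)) :
    Aof (joinG G (↑A : Set V) Fl) (Bof G (↑A : Set V) Fl) = A := by
  ext v
  rw [mem_Aof, mem_Bof, not_not, cIn_mk]
  exact Finset.mem_coe

theorem Bof_indep (G : SimpleGraph V) (A : Set V) (Fl : SimpleGraph ↥A) :
    ∀ c ∈ Bof G A Fl, ∀ d ∈ Bof G A Fl,
      ¬ (contract G (joinG G A Fl)).Adj c d := by
  rintro c hc d hd ⟨hne, u, v, hu, hv, huv⟩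
  rw [mem_Bof] at hc hd
  have hu2 : u ∉ A := by
    intro h
    exact hc (hu ▸ (cIn_mk _ _ (joinG_adjClosed G A Fl) u ▸ h))
  have hv2 : v ∉ A := by
    intro h
    exact hd (hv ▸ (cIn_mk _ _ (joinG_adjClosed G A Fl) v ▸ h))
  have : (joinG G A Fl).Adj u v := joinG_hAG G A Fl u v hu2 hv2 huv
  exact hne (hu ▸ hv ▸ SimpleGraph.ConnectedComponent.sound this.reachable)

theorem recov_hind (G F : SimpleGraph V) (hF : IsFlat G F)
    (B : Finset F.ConnectedComponent)
    (hind : ∀ c ∈ B, ∀ d ∈ B, ¬ (contract G F).Adj c d) :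
    ∀ u v, u ∉ (↑(Aof F B) : Set V) → v ∉ (↑(Aof F B) : Set V) →
      G.Adj u v → F.Adj u v := by
  intro u v hu hv huv
  rw [Finset.mem_coe, mem_Aof, not_not] at hu hv
  by_cases h : F.connectedComponentMk u = F.connectedComponentMk v
  · exact hF.2 u v (SimpleGraph.ConnectedComponent.exact h) huv
  · exact absurd ⟨h, u, v, rfl, rfl, huv⟩ (hind _ hu _ hv)

/-- Counting lemma: the coefficient attached to `(A, Fl)` matches the data of the pair
`(joinG G A Fl, Bof G A Fl)`. -/
theorem coef_join (G : SimpleGraph V) (A : Finset V) (Fl : SimpleGraph ↥(↑A : Set V)) :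
    coef (G.induce (↑A : Set V)) Fl =
      (-1 : ℤ) ^ (Nat.card (joinG G (↑A : Set V) Fl).ConnectedComponent
          + (Bof G (↑A : Set V) Fl).card) *
        (Nat.card {σ : AcyclicOrientation (contract G (joinG G (↑A : Set V) Fl)) //
          ∀ c ∈ Bof G (↑A : Set V) Fl, ∀ u, ¬ σ.r u c} : ℤ) := by
  classical
  set J := joinG G (↑A : Set V) Fl with hJ
  have hA := joinG_adjClosed G (↑A : Set V) Fl
  -- component count
  have hcard : Nat.card J.ConnectedComponent =
      Nat.card Fl.ConnectedComponent + (Bof G (↑A : Set V) Fl).card := by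
    have h1 := card_cc J (↑A : Set V) hA
    rw [joinG_induce] at h1
    rw [h1]
    congr 1
    have : (Bof G (↑A : Set V) Fl).card =
        Fintype.card {c : J.ConnectedComponent // ¬ cIn J (↑A : Set V) hA c} := by
      rw [Fintype.card_subtype]
      apply Finset.card_bij (fun c _ => c) <;> simp [mem_Bof, Finset.mem_filter] <;> exact fun _ h => h
    rw [this, Nat.card_eq_fintype_card]
  -- acyclic orientation count
  have hao : Nat.card (AcyclicOrientation (contract (G.induce (↑A : Set V)) Fl)) =
      Nat.card {σ : AcyclicOrientation (contract G J) //
        ∀ c ∈ Bof G (↑A : Set V) Fl, ∀ u, ¬ σ.r u c} := by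
    have h1 := count_eq J (↑A : Set V) G hA (joinG_hAG G (↑A : Set V) Fl)
    rw [joinG_induce] at h1
    rw [h1]
    apply Nat.card_congr
    apply Equiv.subtypeEquivRight
    intro σ
    constructor
    · intro h c hc
      rw [mem_Bof] at hc
      exact h c hc
    · intro h c hc
      exact h c ((mem_Bof _ _ _ c).mpr hc)
  rw [coef, hao, hcard]
  congr 1
  rw [pow_add, pow_add]
  have : (-1 : ℤ) ^ (Bof G (↑A : Set V) Fl).card *
      (-1 : ℤ) ^ (Bof G (↑A : Set V) Fl).card = 1 := by
    rw [← pow_add]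
    exact Even.neg_one_pow ⟨_, rfl⟩
  calc (-1 : ℤ) ^ Nat.card Fl.ConnectedComponent
      = (-1 : ℤ) ^ Nat.card Fl.ConnectedComponent * ((-1 : ℤ) ^ (Bof G (↑A : Set V) Fl).card *
          (-1 : ℤ) ^ (Bof G (↑A : Set V) Fl).card) := by rw [this, mul_one]
    _ = _ := by ring

/-- Dependent pair extensionality for `(graph, finset of components)` pairs. -/
theorem sigma_mk_eq {F F' : SimpleGraph V} (h : F = F')
    (B : Finset F.ConnectedComponent) (B' : Finset F'.ConnectedComponent)
    (hB : ∀ v : V, F.connectedComponentMk v ∈ B ↔ F'.connectedComponentMk v ∈ B') :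
    (⟨F, B⟩ : Σ F₀ : SimpleGraph V, Finset F₀.ConnectedComponent) = ⟨F', B'⟩ := by
  subst h
  have : B = B' := by
    ext c
    exact SimpleGraph.ConnectedComponent.ind (fun v => hB v) c
  rw [this]

/-- Dependent pair extensionality for `(vertex set, graph)` pairs. -/
theorem sigma_mk_eq' {A A' : Finset V} (h : A = A')
    (Fl : SimpleGraph ↥(↑A : Set V)) (Fl' : SimpleGraph ↥(↑A' : Set V))
    (hFl : ∀ u v (hu : u ∈ (↑A : Set V)) (hv : v ∈ (↑A : Set V))
      (hu' : u ∈ (↑A' : Set V)) (hv' : v ∈ (↑A' : Set V)),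
      Fl.Adj ⟨u, hu⟩ ⟨v, hv⟩ ↔ Fl'.Adj ⟨u, hu'⟩ ⟨v, hv'⟩) :
    (⟨A, Fl⟩ : Σ A₀ : Finset V, SimpleGraph ↥(↑A₀ : Set V)) = ⟨A', Fl'⟩ := by
  subst h
  have : Fl = Fl' := by
    ext ⟨u, hu⟩ ⟨v, hv⟩
    exact hFl u v hu hv hu hv
  rw [this]

end FlatAux
section Hopf

open FlatAux

variable {K : Type} [Field K] {H : Type} [CommRing H] [HopfAlgebra K H]
variable (b : ∀ {V : Type} [Fintype V] [DecidableEq V], SimpleGraph V → H)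

theorem b_rec
    (hcomul : ∀ {V : Type} [Fintype V] [DecidableEq V] (G : SimpleGraph V),
      Coalgebra.comul (R := K) (b G) =
        ∑ A : Finset V,
          b (SimpleGraph.induce (↑A : Set V) G) ⊗ₜ[K]
            b (SimpleGraph.induce (↑(Aᶜ : Finset V) : Set V) G))
    (hcounit : ∀ {V : Type} [Fintype V] [DecidableEq V] (G : SimpleGraph V),
      Coalgebra.counit (R := K) (b G) =
        if Fintype.card V = 0 then (1 : K) else 0)
    {V : Type} [Fintype V] [DecidableEq V] (G : SimpleGraph V) :
    ∑ A : Finset V,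
      HopfAlgebra.antipode (R := K) (b (SimpleGraph.induce (↑A : Set V) G)) *
        b (SimpleGraph.induce (↑(Aᶜ : Finset V) : Set V) G) =
      algebraMap K H (if Fintype.card V = 0 then (1 : K) else 0) := by
  have h := HopfAlgebra.mul_antipode_rTensor_comul_apply (R := K) (a := b G)
  rw [hcomul, map_sum, map_sum] at h
  simp only [LinearMap.rTensor_tmul, LinearMap.mul'_apply] at h
  rw [h, hcounit]

theorem b_eq_one
    (hiso : ∀ {V W : Type} [Fintype V] [DecidableEq V] [Fintype W]
      [DecidableEq W] (G : SimpleGraph V) (G' : SimpleGraph W),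
      Nonempty (G ≃g G') → b G = b G')
    (hmul : ∀ {V W : Type} [Fintype V] [DecidableEq V] [Fintype W]
      [DecidableEq W] (G : SimpleGraph V) (G' : SimpleGraph W),
      b (disjUnion G G') = b G * b G')
    (hcomul : ∀ {V : Type} [Fintype V] [DecidableEq V] (G : SimpleGraph V),
      Coalgebra.comul (R := K) (b G) =
        ∑ A : Finset V,
          b (SimpleGraph.induce (↑A : Set V) G) ⊗ₜ[K]
            b (SimpleGraph.induce (↑(Aᶜ : Finset V) : Set V) G))
    (hcounit : ∀ {V : Type} [Fintype V] [DecidableEq V] (G : SimpleGraph V),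
      Coalgebra.counit (R := K) (b G) =
        if Fintype.card V = 0 then (1 : K) else 0)
    {V : Type} [Fintype V] [DecidableEq V] (hV : Fintype.card V = 0)
    (G : SimpleGraph V) :
    b G = 1 ∧ HopfAlgebra.antipode (R := K) (b G) = 1 := by
  haveI : IsEmpty V := Fintype.card_eq_zero_iff.mp hV
  haveI : Subsingleton (Finset V) :=
    ⟨fun s t => by rw [Finset.eq_empty_of_isEmpty s, Finset.eq_empty_of_isEmpty t]⟩
  haveI h1e : IsEmpty ↥(↑(∅ : Finset V) : Set V) := ⟨fun x => isEmptyElim (x : V)⟩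
  haveI h2e : IsEmpty ↥(↑((∅ : Finset V)ᶜ) : Set V) := ⟨fun x => isEmptyElim (x : V)⟩
  have hrec := b_rec b hcomul hcounit G
  rw [Fintype.sum_subsingleton _ (∅ : Finset V), if_pos hV, map_one] at hrec
  rw [hiso (SimpleGraph.induce (↑(∅ : Finset V) : Set V) G) G ⟨isoOfIsEmpty _ _⟩,
    hiso (SimpleGraph.induce (↑((∅ : Finset V)ᶜ) : Set V) G) G ⟨isoOfIsEmpty _ _⟩] at hrec
  have hsq : b G * b G = b G := by
    rw [← hmul]
    exact hiso _ _ ⟨isoOfIsEmpty _ _⟩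
  have hb1 : b G = 1 := by
    calc b G = 1 * b G := (one_mul _).symm
      _ = (HopfAlgebra.antipode (R := K) (b G) * b G) * b G := by rw [hrec]
      _ = HopfAlgebra.antipode (R := K) (b G) * (b G * b G) := mul_assoc _ _ _
      _ = HopfAlgebra.antipode (R := K) (b G) * b G := by rw [hsq]
      _ = 1 := hrec
  refine ⟨hb1, ?_⟩
  have h2 := hrec
  rw [hb1] at h2 ⊢
  rwa [mul_one] at h2

theorem b_join
    (hiso : ∀ {V W : Type} [Fintype V] [DecidableEq V] [Fintype W]
      [DecidableEq W] (G : SimpleGraph V) (G' : SimpleGraph W),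
      Nonempty (G ≃g G') → b G = b G')
    (hmul : ∀ {V W : Type} [Fintype V] [DecidableEq V] [Fintype W]
      [DecidableEq W] (G : SimpleGraph V) (G' : SimpleGraph W),
      b (disjUnion G G') = b G * b G')
    {V : Type} [Fintype V] [DecidableEq V] (G : SimpleGraph V) (A : Finset V)
    (Fl : SimpleGraph ↥(↑A : Set V)) :
    b Fl * b (SimpleGraph.induce (↑(Aᶜ : Finset V) : Set V) G) =
      b (joinG G (↑A : Set V) Fl) := by
  classical
  rw [← hmul]
  refine hiso _ _ ⟨?_⟩
  have hset : (↑(Aᶜ : Finset V) : Set V) = (↑A : Set V)ᶜ := by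
    ext x; simp
  refine SimpleGraph.Iso.comp (joinIso G (↑A : Set V) Fl)
    (disjUnionCongr (SimpleGraph.Iso.refl (G := Fl)) ?_)
  exact ⟨Equiv.subtypeEquivRight (fun x => by rw [hset]), fun {a b'} => Iff.rfl⟩

theorem b_univ
    (hiso : ∀ {V W : Type} [Fintype V] [DecidableEq V] [Fintype W]
      [DecidableEq W] (G : SimpleGraph V) (G' : SimpleGraph W),
      Nonempty (G ≃g G') → b G = b G')
    {V : Type} [Fintype V] [DecidableEq V] (G : SimpleGraph V) :
    b (SimpleGraph.induce (↑(Finset.univ : Finset V) : Set V) G) = b G := by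
  refine hiso _ _ ⟨⟨Equiv.subtypeUnivEquiv (fun x => Finset.mem_coe.mpr (Finset.mem_univ x)), ?_⟩⟩
  intro a b'
  exact Iff.rfl

end Hopf
section Hopf2

open FlatAux

variable {K : Type} [Field K] {H : Type} [CommRing H] [HopfAlgebra K H]
variable (b : ∀ {V : Type} [Fintype V] [DecidableEq V], SimpleGraph V → H)

open scoped Classical in
theorem univ_term_eq {V : Type} [Fintype V] [DecidableEq V] (G : SimpleGraph V) :
    (∑ Fl : SimpleGraph ↥(↑(Finset.univ : Finset V) : Set V),
      if IsFlat (SimpleGraph.induce (↑(Finset.univ : Finset V) : Set V) G) Fl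
      then coef (SimpleGraph.induce (↑(Finset.univ : Finset V) : Set V) G) Fl •
        b (joinG G (↑(Finset.univ : Finset V) : Set V) Fl) else 0) =
    ∑ Fl : SimpleGraph V, if IsFlat G Fl then coef G Fl • b Fl else 0 := by
  classical
  have hmemU : ∀ x : V, x ∈ (↑(Finset.univ : Finset V) : Set V) :=
    fun x => Finset.mem_coe.mpr (Finset.mem_univ x)
  refine Finset.sum_nbij'
    (fun Fl => joinG G (↑(Finset.univ : Finset V) : Set V) Fl)
    (fun F => F.induce (↑(Finset.univ : Finset V) : Set V))
    (fun _ _ => Finset.mem_univ _) (fun _ _ => Finset.mem_univ _) ?_ ?_ ?_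
  · intro Fl _
    exact joinG_induce G _ Fl
  · intro F _
    ext u v
    constructor
    · rintro (⟨hu, hv, h⟩ | ⟨hu, -, -⟩)
      · exact h
      · exact absurd (hmemU u) hu
    · intro h
      exact Or.inl ⟨hmemU u, hmemU v, h⟩
  · intro Fl _
    have hA := joinG_adjClosed G (↑(Finset.univ : Finset V) : Set V) Fl
    have hcond : IsFlat (SimpleGraph.induce (↑(Finset.univ : Finset V) : Set V) G) Fl ↔
        IsFlat G (joinG G (↑(Finset.univ : Finset V) : Set V) Fl) := by
      constructor
      · exact joinG_isFlat G _ Fl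
      · intro h
        have := induce_isFlat G _ _ hA h
        rwa [joinG_induce] at this
    have hcintrue : ∀ c, cIn (joinG G (↑(Finset.univ : Finset V) : Set V) Fl) _ hA c :=
      fun c => SimpleGraph.ConnectedComponent.ind (fun v => hmemU v) c
    have hccard : Nat.card (joinG G (↑(Finset.univ : Finset V) : Set V)
        Fl).ConnectedComponent = Nat.card Fl.ConnectedComponent := by
      have h1 := card_cc (joinG G (↑(Finset.univ : Finset V) : Set V) Fl) _ hA
      rw [joinG_induce] at h1
      haveI hie : IsEmpty {c : (joinG G (↑(Finset.univ : Finset V) : Set V)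
          Fl).ConnectedComponent // ¬ cIn _ _ hA c} := ⟨fun x => x.2 (hcintrue x.1)⟩
      rw [h1, @Nat.card_of_isEmpty _ hie, add_zero]
    have hao : Nat.card (AcyclicOrientation
          (contract (SimpleGraph.induce (↑(Finset.univ : Finset V) : Set V) G) Fl)) =
        Nat.card (AcyclicOrientation
          (contract G (joinG G (↑(Finset.univ : Finset V) : Set V) Fl))) := by
      have h1 := count_eq (joinG G (↑(Finset.univ : Finset V) : Set V) Fl) _ G hA
        (fun u v hu _ _ => absurd (hmemU u) hu)
      rw [joinG_induce] at h1
      rw [h1]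
      exact Nat.card_congr (Equiv.subtypeUnivEquiv (fun σ c hc => absurd (hcintrue c) hc))
    have hcoef : coef (SimpleGraph.induce (↑(Finset.univ : Finset V) : Set V) G) Fl =
        coef G (joinG G (↑(Finset.univ : Finset V) : Set V) Fl) := by
      rw [coef, coef, hccard, hao]
    rw [hcoef]
    exact if_congr hcond rfl rfl

open scoped Classical in
theorem grand_sum_zero {V : Type} [Fintype V] [DecidableEq V] [Nonempty V]
    (G : SimpleGraph V) :
    ∑ A : Finset V, ∑ Fl : SimpleGraph ↥(↑A : Set V),
      (if IsFlat (SimpleGraph.induce (↑A : Set V) G) Fl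
       then coef (SimpleGraph.induce (↑A : Set V) G) Fl •
         b (joinG G (↑A : Set V) Fl) else 0) = 0 := by
  classical
  rw [Finset.sum_sigma']
  rw [← Finset.sum_filter]
  have key : ∑ x ∈ ((Finset.univ : Finset (Finset V)).sigma
        (fun A => (Finset.univ : Finset (SimpleGraph ↥(↑A : Set V))))).filter
        (fun x => IsFlat (SimpleGraph.induce (↑x.1 : Set V) G) x.2),
      coef (SimpleGraph.induce (↑x.1 : Set V) G) x.2 • b (joinG G (↑x.1 : Set V) x.2) =
    ∑ y ∈ ((Finset.univ : Finset (SimpleGraph V)).sigma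
        (fun F => (Finset.univ : Finset (Finset F.ConnectedComponent)))).filter
        (fun y => IsFlat G y.1 ∧ ∀ c ∈ y.2, ∀ d ∈ y.2, ¬ (contract G y.1).Adj c d),
      (((-1 : ℤ) ^ (Nat.card y.1.ConnectedComponent + y.2.card) *
        (Nat.card {σ : AcyclicOrientation (contract G y.1) //
          ∀ c ∈ y.2, ∀ u, ¬ σ.r u c} : ℤ)) • b y.1) := by
    refine Finset.sum_nbij'
      (fun x => ⟨joinG G (↑x.1 : Set V) x.2, Bof G (↑x.1 : Set V) x.2⟩)
      (fun y => ⟨Aof y.1 y.2, y.1.induce (↑(Aof y.1 y.2) : Set V)⟩)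
      ?_ ?_ ?_ ?_ ?_
    · rintro ⟨A, Fl⟩ hx
      rw [Finset.mem_filter] at hx ⊢
      refine ⟨by simp, joinG_isFlat G _ Fl hx.2, Bof_indep G _ Fl⟩
    · rintro ⟨F, B⟩ hy
      rw [Finset.mem_filter] at hy ⊢
      exact ⟨by simp, induce_isFlat G F _ (Aof_adjClosed F B) hy.2.1⟩
    · rintro ⟨A, Fl⟩ hx
      refine sigma_mk_eq' (Aof_Bof G A Fl) _ _ ?_
      intro u v hu hv hu' hv'
      constructor
      · rintro (⟨h1, h2, h⟩ | ⟨h1, -, -⟩)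
        · exact h
        · exact absurd hu' h1
      · intro h
        exact Or.inl ⟨hu', hv', h⟩
    · rintro ⟨F, B⟩ hy
      rw [Finset.mem_filter] at hy
      have hjoin := joinG_recover G F hy.2.1 (↑(Aof F B) : Set V)
        (Aof_adjClosed F B) (recov_hind G F hy.2.1 B hy.2.2)
      refine sigma_mk_eq hjoin _ _ ?_
      intro v
      simp only [mem_Bof, cIn_mk, Finset.mem_coe, mem_Aof, not_not]
    · rintro ⟨A, Fl⟩ hx
      rw [coef_join G A Fl]
  rw [key, Finset.sum_filter, Finset.sum_sigma]
  refine Finset.sum_eq_zero fun F _ => ?_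
  by_cases hF : IsFlat G F
  · haveI : Nonempty F.ConnectedComponent :=
      ⟨F.connectedComponentMk (Classical.arbitrary V)⟩
    have h1 : ∀ B : Finset F.ConnectedComponent,
        (if (IsFlat G F ∧ ∀ c ∈ B, ∀ d ∈ B, ¬ (contract G F).Adj c d)
         then (((-1 : ℤ) ^ (Nat.card F.ConnectedComponent + B.card) *
           (Nat.card {σ : AcyclicOrientation (contract G F) //
             ∀ c ∈ B, ∀ u, ¬ σ.r u c} : ℤ)) • b F) else 0) =
        (((-1 : ℤ) ^ (Nat.card F.ConnectedComponent + B.card) *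
           (Nat.card {σ : AcyclicOrientation (contract G F) //
             ∀ c ∈ B, ∀ u, ¬ σ.r u c} : ℤ)) • b F) := by
      intro B
      by_cases hind : ∀ c ∈ B, ∀ d ∈ B, ¬ (contract G F).Adj c d
      · rw [if_pos ⟨hF, hind⟩]
      · rw [if_neg (fun h => hind h.2)]
        push_neg at hind
        obtain ⟨c, hc, d, hd, hadj⟩ := hind
        haveI : IsEmpty {σ : AcyclicOrientation (contract G F) //
            ∀ c ∈ B, ∀ u, ¬ σ.r u c} := by
          refine ⟨fun σ => ?_⟩
          rcases σ.1.total c d hadj with h | h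
          · exact σ.2 d hd c h
          · exact σ.2 c hc d h
        rw [@Nat.card_of_isEmpty _ this]
        simp
    rw [Finset.sum_congr rfl (fun B _ => h1 B), ← Finset.sum_smul]
    have h2 : ∑ B : Finset F.ConnectedComponent,
        ((-1 : ℤ) ^ (Nat.card F.ConnectedComponent + B.card) *
          (Nat.card {σ : AcyclicOrientation (contract G F) //
            ∀ c ∈ B, ∀ u, ¬ σ.r u c} : ℤ)) = 0 := by
      calc ∑ B : Finset F.ConnectedComponent,
            ((-1 : ℤ) ^ (Nat.card F.ConnectedComponent + B.card) *
              (Nat.card {σ : AcyclicOrientation (contract G F) //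
                ∀ c ∈ B, ∀ u, ¬ σ.r u c} : ℤ))
          = (-1 : ℤ) ^ (Nat.card F.ConnectedComponent) *
            ∑ B : Finset F.ConnectedComponent, ((-1 : ℤ) ^ B.card *
              (Nat.card {σ : AcyclicOrientation (contract G F) //
                ∀ c ∈ B, ∀ u, ¬ σ.r u c} : ℤ)) := by
            rw [Finset.mul_sum]
            refine Finset.sum_congr rfl fun B _ => ?_
            rw [pow_add]
            ring
        _ = 0 := by rw [key_count (contract G F), mul_zero]
    rw [h2, zero_smul]
  · exact Finset.sum_eq_zero fun B _ => if_neg (fun h => hF h.1)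

end Hopf2
section Hopf3

open FlatAux

variable {K : Type} [Field K] {H : Type} [CommRing H] [HopfAlgebra K H]
variable (b : ∀ {V : Type} [Fintype V] [DecidableEq V], SimpleGraph V → H)

open scoped Classical in
theorem main_base
    (hiso : ∀ {V W : Type} [Fintype V] [DecidableEq V] [Fintype W]
      [DecidableEq W] (G : SimpleGraph V) (G' : SimpleGraph W),
      Nonempty (G ≃g G') → b G = b G')
    (hmul : ∀ {V W : Type} [Fintype V] [DecidableEq V] [Fintype W]
      [DecidableEq W] (G : SimpleGraph V) (G' : SimpleGraph W),
      b (disjUnion G G') = b G * b G')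
    (hcomul : ∀ {V : Type} [Fintype V] [DecidableEq V] (G : SimpleGraph V),
      Coalgebra.comul (R := K) (b G) =
        ∑ A : Finset V,
          b (SimpleGraph.induce (↑A : Set V) G) ⊗ₜ[K]
            b (SimpleGraph.induce (↑(Aᶜ : Finset V) : Set V) G))
    (hcounit : ∀ {V : Type} [Fintype V] [DecidableEq V] (G : SimpleGraph V),
      Coalgebra.counit (R := K) (b G) =
        if Fintype.card V = 0 then (1 : K) else 0)
    {V : Type} [Fintype V] [DecidableEq V] (hV : Fintype.card V = 0)
    (G : SimpleGraph V) :
    HopfAlgebra.antipode (R := K) (b G) =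
      ∑ Fl : SimpleGraph V, if IsFlat G Fl then coef G Fl • b Fl else 0 := by
  haveI : IsEmpty V := Fintype.card_eq_zero_iff.mp hV
  obtain ⟨hb1, hs1⟩ := b_eq_one b hiso hmul hcomul hcounit hV G
  rw [hs1]
  haveI : Subsingleton (SimpleGraph V) :=
    ⟨fun G1 G2 => by ext a c; exact isEmptyElim a⟩
  rw [Fintype.sum_subsingleton _ G]
  have hflat : IsFlat G G := ⟨le_rfl, fun u v _ h => h⟩
  rw [if_pos hflat]
  haveI : IsEmpty G.ConnectedComponent := SimpleGraph.ConnectedComponent.isEmpty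
  rw [coef, Nat.card_of_isEmpty, ao_card_empty, pow_zero, hb1]
  simp

open scoped Classical in
theorem main_formula
    (hiso : ∀ {V W : Type} [Fintype V] [DecidableEq V] [Fintype W]
      [DecidableEq W] (G : SimpleGraph V) (G' : SimpleGraph W),
      Nonempty (G ≃g G') → b G = b G')
    (hmul : ∀ {V W : Type} [Fintype V] [DecidableEq V] [Fintype W]
      [DecidableEq W] (G : SimpleGraph V) (G' : SimpleGraph W),
      b (disjUnion G G') = b G * b G')
    (hcomul : ∀ {V : Type} [Fintype V] [DecidableEq V] (G : SimpleGraph V),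
      Coalgebra.comul (R := K) (b G) =
        ∑ A : Finset V,
          b (SimpleGraph.induce (↑A : Set V) G) ⊗ₜ[K]
            b (SimpleGraph.induce (↑(Aᶜ : Finset V) : Set V) G))
    (hcounit : ∀ {V : Type} [Fintype V] [DecidableEq V] (G : SimpleGraph V),
      Coalgebra.counit (R := K) (b G) =
        if Fintype.card V = 0 then (1 : K) else 0) :
    ∀ (N : ℕ) (V : Type) [Fintype V] [DecidableEq V] (G : SimpleGraph V),
      Fintype.card V ≤ N →
      HopfAlgebra.antipode (R := K) (b G) =
        ∑ Fl : SimpleGraph V, if IsFlat G Fl then coef G Fl • b Fl else 0 := by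
  intro N
  induction N with
  | zero =>
      intro V _ _ G hV
      exact main_base b hiso hmul hcomul hcounit (Nat.le_zero.mp hV) G
  | succ N ih =>
      intro V _ _ G hV
      by_cases h0 : Fintype.card V = 0
      · exact main_base b hiso hmul hcomul hcounit h0 G
      · haveI : Nonempty V := Fintype.card_pos_iff.mp (Nat.pos_of_ne_zero h0)
        have hrec := b_rec b hcomul hcounit G
        rw [if_neg h0, map_zero] at hrec
        rw [← Finset.add_sum_erase _ _ (Finset.mem_univ (Finset.univ : Finset V))] at hrec
        have huniv1 : b (SimpleGraph.induce (↑((Finset.univ : Finset V)ᶜ) : Set V) G)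
            = 1 := by
          refine (b_eq_one b hiso hmul hcomul hcounit ?_ _).1
          rw [Fintype.card_eq_zero_iff]
          refine ⟨fun x => absurd x.2 (by simp)⟩
        rw [b_univ b hiso G, huniv1, mul_one] at hrec
        have hterm : ∀ A ∈ (Finset.univ : Finset (Finset V)).erase Finset.univ,
            HopfAlgebra.antipode (R := K) (b (SimpleGraph.induce (↑A : Set V) G)) *
              b (SimpleGraph.induce (↑(Aᶜ : Finset V) : Set V) G) =
            ∑ Fl : SimpleGraph ↥(↑A : Set V),
              (if IsFlat (SimpleGraph.induce (↑A : Set V) G) Fl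
               then coef (SimpleGraph.induce (↑A : Set V) G) Fl •
                 b (joinG G (↑A : Set V) Fl)
               else 0) := by
          intro A hA
          have hAne : A ≠ Finset.univ := (Finset.mem_erase.mp hA).1
          have hcard : Fintype.card ↥(↑A : Set V) ≤ N := by
            have h1 : Fintype.card ↥(↑A : Set V) = A.card :=
              (Fintype.card_congr (Equiv.subtypeEquivRight
                (fun x => Finset.mem_coe))).trans (Fintype.card_coe A)
            have h2 : A.card < Fintype.card V := by
              rw [← Finset.card_univ]
              exact Finset.card_lt_card (Finset.ssubset_univ_iff.mpr hAne)
            omega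
          rw [ih ↥(↑A : Set V) (SimpleGraph.induce (↑A : Set V) G) hcard]
          rw [Finset.sum_mul]
          refine Finset.sum_congr rfl fun Fl _ => ?_
          rw [ite_mul, zero_mul, smul_mul_assoc, b_join b hiso hmul G A Fl]
        rw [Finset.sum_congr rfl hterm] at hrec
        have hT := grand_sum_zero b G
        have h6 := Finset.add_sum_erase Finset.univ
          (fun A : Finset V => ∑ Fl : SimpleGraph ↥(↑A : Set V),
            (if IsFlat (SimpleGraph.induce (↑A : Set V) G) Fl
             then coef (SimpleGraph.induce (↑A : Set V) G) Fl •
               b (joinG G (↑A : Set V) Fl)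
             else 0)) (Finset.mem_univ Finset.univ)
        rw [hT] at h6
        have h7 := univ_term_eq b G
        have h8 : HopfAlgebra.antipode (R := K) (b G) =
            ∑ Fl : SimpleGraph ↥(↑(Finset.univ : Finset V) : Set V),
              (if IsFlat (SimpleGraph.induce (↑(Finset.univ : Finset V) : Set V) G) Fl
               then coef (SimpleGraph.induce (↑(Finset.univ : Finset V) : Set V) G) Fl •
                 b (joinG G (↑(Finset.univ : Finset V) : Set V) Fl)
               else 0) := by
          linear_combination hrec - h6
        rw [h8, h7]

end Hopf3

/-- in the incidence Hopf algebra on graphs, the antipode of (the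
class of) a simple graph `G` on `[n]` is
`S(G) = ∑_{F flat of G} (-1)^{c(F)} a(G/F) F`.  The incidence Hopf algebra is
formalized as a Hopf algebra `H` over a field `K` with a map `b` assigning an
element of `H` to every simple graph on a finite vertex set, invariant under
graph isomorphism, multiplicative for disjoint unions, with coproduct given by
ordered pairs of complementary induced subgraphs and counit supported on the
empty graph. -/
theorem graph_incidence_antipode (K : Type) [Field K] (H : Type) [CommRing H]
    [HopfAlgebra K H]
    (b : ∀ {V : Type} [Fintype V] [DecidableEq V], SimpleGraph V → H)
    (hiso : ∀ {V W : Type} [Fintype V] [DecidableEq V] [Fintype W]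
      [DecidableEq W] (G : SimpleGraph V) (G' : SimpleGraph W),
      Nonempty (G ≃g G') → b G = b G')
    (hmul : ∀ {V W : Type} [Fintype V] [DecidableEq V] [Fintype W]
      [DecidableEq W] (G : SimpleGraph V) (G' : SimpleGraph W),
      b (disjUnion G G') = b G * b G')
    (hcomul : ∀ {V : Type} [Fintype V] [DecidableEq V] (G : SimpleGraph V),
      Coalgebra.comul (R := K) (b G) =
        ∑ A : Finset V,
          b (SimpleGraph.induce (↑A : Set V) G) ⊗ₜ[K]
            b (SimpleGraph.induce (↑(Aᶜ : Finset V) : Set V) G))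
    (hcounit : ∀ {V : Type} [Fintype V] [DecidableEq V] (G : SimpleGraph V),
      Coalgebra.counit (R := K) (b G) =
        if Fintype.card V = 0 then (1 : K) else 0)
    (n : ℕ) (G : SimpleGraph (Fin n)) :
    HopfAlgebra.antipode (R := K) (b G) =
      ∑ᶠ (Fl : SimpleGraph (Fin n)) (_ : IsFlat G Fl),
        ((-1 : ℤ) ^ (Nat.card Fl.ConnectedComponent) *
          (Nat.card (AcyclicOrientation (contract G Fl)) : ℤ)) • b Fl := by
  classical
  have h := main_formula b hiso hmul hcomul hcounit (Fintype.card (Fin n)) (Fin n) G le_rfl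
  rw [h, finsum_eq_sum_of_fintype]
  refine Finset.sum_congr rfl fun Fl _ => ?_
  rw [finsum_eq_if]
  simp only [FlatAux.coef]
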